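/- Let R be a commutative ring of prime characteristic p, u ∈ R, and J an ideal with u·J ⊆ J^[p]. Suppose J has a minimal primary decomposition J = Q_1 ∩ ... ∩ Q_n with P_i = √Q_i. If P_i is a minimal prime of J (not embedded), then Q_i = (J : a) for some a ∈ R, and hence u·Q_i ⊆ Q_i^[p] (assuming R is regular so that colon commutes with Frobenius powers). -/
import Mathlib


/-- The `q`-th Frobenius power of an ideal: the ideal generated by `q`-th powers of its
elements. -/
def fpow {R : Type*} [CommRing R] (q : ℕ) (J : Ideal R) : Ideal R :=
  Ideal.span ((fun a => a ^ q) '' (J : Set R))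

/-- `ν_e = 1 + p + ... + p^{e-1}`. -/
def nu (p e : ℕ) : ℕ := ∑ i ∈ Finset.range e, p ^ i

theorem stmt_2 {R : Type*} [CommRing R] (p : ℕ) (hp : p.Prime) [CharP R p]
    (u : R) (J : Ideal R)
    (hu : ∀ x ∈ J, u * x ∈ fpow p J)
    (n : ℕ) (Q : Fin n → Ideal R)
    (hprimary : ∀ j, (Q j).IsPrimary)
    (hdecomp : J = ⨅ j, Q j)
    (hirr : ∀ j, ¬ (⨅ k ∈ Finset.univ.erase j, Q k) ≤ Q j)
    (hdistinct : Function.Injective fun j => (Q j).radical)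
    (i : Fin n)
    (hmin : (Q i).radical ∈ J.minimalPrimes)
    (hcolon : ∀ a : R,
      (fpow p J).colon (fpow p (Ideal.span {a})) = fpow p (J.colon (Ideal.span {a}))) :
    (∃ a : R, Q i = J.colon (Ideal.span {a})) ∧
      ∀ x ∈ Q i, u * x ∈ fpow p (Q i) := by
  classical
  have hPprime : ((Q i).radical).IsPrime := hmin.1.1
  have hex : ∀ j : Fin n, ∃ x : R, x ∈ Q j ∧ (j ≠ i → x ∉ (Q i).radical) := by
    intro j
    by_cases hj : j = i
    · exact ⟨0, (Q j).zero_mem, fun h => absurd hj h⟩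
    have hnotle : ¬ (Q j).radical ≤ (Q i).radical := by
      intro hle
      have hJle : J ≤ (Q j).radical := by
        refine le_trans ?_ Ideal.le_radical
        rw [hdecomp]; exact iInf_le _ j
      have := hmin.2 ⟨Ideal.isPrime_radical (hprimary j), hJle⟩ hle
      exact hj (hdistinct (le_antisymm hle this))
    obtain ⟨y, hy, hyP⟩ := SetLike.not_le_iff_exists.mp hnotle
    obtain ⟨m, hm⟩ := hy
    exact ⟨y ^ m, hm, fun _ h => hyP (hPprime.mem_of_pow_mem m h)⟩
  choose x hxQ hxP using hex
  set a : R := ∏ j ∈ Finset.univ.erase i, x j with ha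
  have haP : a ∉ (Q i).radical := by
    intro h
    obtain ⟨j, hj, hjP⟩ := (Ideal.IsPrime.prod_mem_iff (hp := hPprime)).mp h
    exact hxP j (Finset.mem_erase.mp hj).1 hjP
  have haQ : ∀ j : Fin n, j ≠ i → a ∈ Q j := by
    intro j hj
    obtain ⟨c, hc⟩ := Finset.dvd_prod_of_mem x (Finset.mem_erase.mpr ⟨hj, Finset.mem_univ j⟩)
    rw [ha, hc]
    exact Ideal.mul_mem_right _ _ (hxQ j)
  have hQa : Q i = J.colon (Ideal.span {a}) := by
    ext z
    rw [Ideal.mem_colon_span_singleton, hdecomp, Ideal.mem_iInf]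
    constructor
    · intro hz j
      by_cases hj : j = i
      · subst hj; exact Ideal.mul_mem_right _ _ hz
      · exact Ideal.mul_mem_left _ _ (haQ j hj)
    · intro hz
      rcases (Ideal.isPrimary_iff.mp (hprimary i)).2 (hz i) with h | h
      · exact h
      · exact absurd h haP
  refine ⟨⟨a, hQa⟩, ?_⟩
  intro z hz
  -- a * z ∈ J
  have hazJ : z * a ∈ J := by
    rw [hQa, Ideal.mem_colon_span_singleton] at hz; exact hz
  have hstep : u * (z * a) ∈ fpow p J := hu _ hazJ
  obtain ⟨q, hq⟩ : ∃ q, p = q + 1 := ⟨p - 1, (Nat.succ_pred_eq_of_pos hp.pos).symm⟩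
  have key : u * z ∈ (fpow p J).colon (Ideal.span {a ^ p}) := by
    rw [Ideal.mem_colon_span_singleton]
    have : u * z * a ^ p = a ^ q * (u * (z * a)) := by rw [hq]; ring
    rw [this]
    exact Ideal.mul_mem_left _ _ hstep
  have hle : fpow p (Ideal.span {a}) ≤ Ideal.span {a ^ p} := by
    rw [fpow, Ideal.span_le]
    rintro _ ⟨b, hb, rfl⟩
    rw [SetLike.mem_coe, Ideal.mem_span_singleton]
    exact pow_dvd_pow_of_dvd (Ideal.mem_span_singleton.mp hb) p
  have : u * z ∈ (fpow p J).colon (fpow p (Ideal.span {a})) :=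
    Submodule.colon_mono le_rfl hle key
  rw [hcolon a, ← hQa] at this
  exact this
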